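/- Let X be a Banach space, A ⊆ X convex with 0 ∈ A, and φ : X → ℝ∪{±∞} convex with φ(0) finite. Suppose there exist M ∈ ℝ and ε > 0 such that φ(z) ≤ M for all z ∈ aff A with ‖z‖ ≤ ε, where aff dom φ ⊆ aff A and aff A is closed. Then φ is continuous at 0 relative to aff dom φ and hence subdifferentiable at 0: there exists a continuous linear functional v on X with φ(z) ≥ φ(0) + v(z) for all z ∈ X. -/

import Mathlib

open Filter Set

/-- A convex extended-real function on a Banach space, finite at `0`,
bounded above near `0` relative to a closed affine hull containing `aff dom φ`,
is continuous at `0` relative to `aff dom φ` and subdifferentiable at `0`. -/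
theorem stmt15 {X : Type*} [NormedAddCommGroup X] [NormedSpace ℝ X] [CompleteSpace X]
    (A : Set X) (hA : Convex ℝ A) (h0A : (0 : X) ∈ A)
    (φ : X → EReal)
    (hconv : ∀ x y : X, ∀ a b : ℝ, 0 ≤ a → 0 ≤ b → a + b = 1 →
      φ (a • x + b • y) ≤ (a : EReal) * φ x + (b : EReal) * φ y)
    (hfin : φ 0 ≠ ⊤ ∧ φ 0 ≠ ⊥)
    (M ε : ℝ) (hε : 0 < ε)
    (hbdd : ∀ z ∈ (affineSpan ℝ A : Set X), ‖z‖ ≤ ε → φ z ≤ (M : EReal))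
    (hdom : (affineSpan ℝ {x : X | φ x ≠ ⊤} : Set X) ⊆ (affineSpan ℝ A : Set X))
    (hclosed : IsClosed (affineSpan ℝ A : Set X)) :
    Filter.Tendsto φ (nhdsWithin 0 (affineSpan ℝ {x : X | φ x ≠ ⊤} : Set X)) (nhds (φ 0)) ∧
      ∃ v : X →L[ℝ] ℝ, ∀ z : X, φ 0 + ((v z : ℝ) : EReal) ≤ φ z := by
  classical
  obtain ⟨hnt, hnb⟩ := hfin
  set r0 : ℝ := (φ 0).toReal with hr0def
  have hr0 : φ 0 = (r0 : EReal) := (EReal.coe_toReal hnt hnb).symm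
  have h0span : (0 : X) ∈ affineSpan ℝ A := subset_affineSpan ℝ A h0A
  set Y : Submodule ℝ X := (affineSpan ℝ A).direction with hYdef
  have hYA : ∀ x : X, x ∈ (affineSpan ℝ A : Set X) ↔ x ∈ Y := by
    intro x
    constructor
    · intro hx
      have := AffineSubspace.vsub_mem_direction hx h0span
      simpa using this
    · intro hx
      have := AffineSubspace.vadd_mem_of_mem_direction hx h0span
      simpa using this
  have hφM : ∀ x : X, x ∈ Y → ‖x‖ ≤ ε → φ x ≤ (M : EReal) := fun x hx h =>
    hbdd x ((hYA x).2 hx) h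
  -- φ is never ⊥
  have nbot : ∀ x : X, φ x ≠ ⊥ := by
    intro y hy
    have hyY : y ∈ Y := by
      apply (hYA y).1
      apply hdom
      exact subset_affineSpan ℝ {x : X | φ x ≠ ⊤} (by simp [Set.mem_setOf_eq, hy])
    set t : ℝ := ε / (‖y‖ + 1) with htdef
    have hny : (0:ℝ) < ‖y‖ + 1 := by positivity
    have ht : 0 < t := div_pos hε hny
    have hw : φ (-(t • y)) ≤ (M : EReal) := by
      apply hφM
      · exact Y.neg_mem (Y.smul_mem t hyY)
      · rw [norm_neg, norm_smul, Real.norm_eq_abs, abs_of_pos ht, htdef,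
          div_mul_eq_mul_div, div_le_iff₀ hny]
        nlinarith [norm_nonneg y]
    have h1t : (0:ℝ) < 1 + t := by linarith
    have hcomb := hconv y (-(t • y)) (t / (1+t)) (1 / (1+t)) (by positivity) (by positivity)
      (by rw [← add_div, add_comm t 1, div_self (ne_of_gt h1t)])
    have harg : (t/(1+t)) • y + (1/(1+t)) • (-(t • y)) = (0:X) := by
      rw [smul_neg, smul_smul, ← sub_eq_add_neg, ← sub_smul]
      have h0 : t/(1+t) - 1/(1+t) * t = 0 := by field_simp; ring
      rw [h0, zero_smul]
    rw [harg, hy] at hcomb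
    rw [EReal.coe_mul_bot_of_pos (by positivity), EReal.bot_add] at hcomb
    exact hnb (le_bot_iff.1 hcomb)
  -- a bounded value is a finite real value
  have hreal : ∀ (x : X) (m : ℝ), φ x ≤ (m : EReal) → ∃ s : ℝ, φ x = (s : EReal) ∧ s ≤ m := by
    intro x m hx
    have hxt : φ x ≠ ⊤ := fun h => (not_le.mpr (EReal.coe_lt_top m)) (h ▸ hx)
    refine ⟨(φ x).toReal, (EReal.coe_toReal hxt (nbot x)).symm, ?_⟩
    rw [← EReal.coe_le_coe_iff, EReal.coe_toReal hxt (nbot x)]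
    exact hx
  have hM0 : r0 ≤ M := by
    have h := hbdd 0 h0span (by simp [le_of_lt hε])
    rw [hr0, EReal.coe_le_coe_iff] at h
    exact h
  -- the key two-sided local estimate
  have key : ∀ z : X, z ∈ Y → ∀ t : ℝ, 0 < t → t ≤ 1 → ‖z‖ ≤ t * ε →
      ∃ s : ℝ, φ z = (s : EReal) ∧ |s - r0| ≤ t * (M - r0) := by
    intro z hz t ht ht1 hzt
    have hzI : t⁻¹ • z ∈ Y := Y.smul_mem _ hz
    have hnormI : ‖t⁻¹ • z‖ ≤ ε := by
      rw [norm_smul, Real.norm_eq_abs, abs_of_pos (inv_pos.2 ht), inv_mul_le_iff₀ ht]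
      linarith
    obtain ⟨s1, hs1, hs1M⟩ := hreal _ M (hφM _ hzI hnormI)
    obtain ⟨s2, hs2, hs2M⟩ := hreal _ M (hφM _ (Y.neg_mem hzI) (by rwa [norm_neg]))
    -- upper bound
    have hup := hconv (t⁻¹ • z) 0 t (1 - t) (le_of_lt ht) (by linarith) (by ring)
    have harg1 : t • (t⁻¹ • z) + (1 - t) • (0:X) = z := by
      rw [smul_zero, add_zero, smul_smul, mul_inv_cancel₀ (ne_of_gt ht), one_smul]
    rw [harg1, hs1, hr0, ← EReal.coe_mul, ← EReal.coe_mul, ← EReal.coe_add] at hup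
    have hznt : φ z ≠ ⊤ := fun h => (not_le.mpr (EReal.coe_lt_top (t * s1 + (1 - t) * r0))) (h ▸ hup)
    set sz : ℝ := (φ z).toReal with hszdef
    have hsz : φ z = (sz : EReal) := (EReal.coe_toReal hznt (nbot z)).symm
    have hupR : sz ≤ t * s1 + (1 - t) * r0 := by
      rw [← EReal.coe_le_coe_iff, ← hsz]; exact hup
    -- lower bound
    have h1t : (0:ℝ) < 1 + t := by linarith
    have hlow := hconv z (-(t⁻¹ • z)) (1/(1+t)) (t/(1+t)) (by positivity) (by positivity)
      (by rw [← add_div, div_self (ne_of_gt h1t)])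
    have harg2 : (1/(1+t)) • z + (t/(1+t)) • (-(t⁻¹ • z)) = (0:X) := by
      rw [smul_neg, smul_smul, ← sub_eq_add_neg, ← sub_smul]
      have h0 : 1/(1+t) - t/(1+t) * t⁻¹ = 0 := by field_simp; ring
      rw [h0, zero_smul]
    rw [harg2, hr0, hsz, hs2, ← EReal.coe_mul, ← EReal.coe_mul, ← EReal.coe_add,
      EReal.coe_le_coe_iff] at hlow
    refine ⟨sz, hsz, ?_⟩
    rw [abs_le]
    have hts1 : t * s1 ≤ t * M := mul_le_mul_of_nonneg_left hs1M (le_of_lt ht)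
    have hts2 : t * s2 ≤ t * M := mul_le_mul_of_nonneg_left hs2M (le_of_lt ht)
    constructor
    · have h2 : r0 * (1+t) ≤ 1 * sz + t * s2 := by
        rw [div_mul_eq_mul_div, div_mul_eq_mul_div, ← add_div, le_div_iff₀ h1t] at hlow
        linarith
      nlinarith
    · linarith
  constructor
  · -- continuity at 0 relative to aff dom φ
    set F := nhdsWithin (0:X) (affineSpan ℝ {x : X | φ x ≠ ⊤} : Set X) with hF
    have hevS : ∀ᶠ z in F, z ∈ (affineSpan ℝ {x : X | φ x ≠ ⊤} : Set X) :=
      eventually_mem_nhdsWithin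
    have hevB : ∀ᶠ z in F, ‖z‖ < ε := by
      have h1 : ∀ᶠ z in nhds (0:X), ‖z‖ < ε := by
        filter_upwards [Metric.ball_mem_nhds (0:X) hε] with z hz
        rwa [Metric.mem_ball, dist_zero_right] at hz
      exact h1.filter_mono nhdsWithin_le_nhds
    have hkey2 : ∀ᶠ z in F, |(φ z).toReal - r0| ≤ (M - r0)/ε * ‖z‖ ∧
        φ z = (((φ z).toReal : ℝ) : EReal) := by
      filter_upwards [hevS, hevB] with z hzS hzB
      have hzY : z ∈ Y := (hYA z).1 (hdom hzS)
      by_cases h0 : z = 0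
      · subst h0
        refine ⟨by simp [hr0def], by rw [hr0]; simp⟩
      · have hz0 : 0 < ‖z‖ := norm_pos_iff.2 h0
        obtain ⟨s, hs, habs⟩ := key z hzY (‖z‖/ε) (div_pos hz0 hε)
          (div_le_one_of_le₀ hzB.le hε.le) (by rw [div_mul_cancel₀ _ (ne_of_gt hε)])
        rw [hs]
        refine ⟨?_, by rw [EReal.toReal_coe]⟩
        rw [EReal.toReal_coe, show (M - r0)/ε * ‖z‖ = ‖z‖/ε * (M - r0) by ring]
        exact habs
    have htR0 : Tendsto (fun z => (φ z).toReal - r0) F (nhds 0) := by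
      apply squeeze_zero_norm' (hkey2.mono fun z h => by simpa [Real.norm_eq_abs] using h.1)
      have hcont : Continuous fun z : X => (M - r0)/ε * ‖z‖ := continuous_const.mul continuous_norm
      exact (hcont.tendsto' 0 0 (by simp)).mono_left nhdsWithin_le_nhds
    have htR : Tendsto (fun z => (φ z).toReal) F (nhds r0) := by
      have h2 := htR0.add_const r0
      simpa using h2
    rw [hr0]
    have hco : Tendsto (fun z => (((φ z).toReal : ℝ) : EReal)) F (nhds ((r0 : ℝ) : EReal)) :=
      (continuous_coe_real_ereal.tendsto r0).comp htR
    exact hco.congr' (hkey2.mono fun z h => h.2.symm)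
  · -- subgradient at 0
    set Epi : Set (Y × ℝ) := {p : Y × ℝ | φ (p.1 : X) ≤ ((p.2 : ℝ) : EReal)} with hEpi
    have hEpiConv : Convex ℝ Epi := by
      intro p hp q hq a b ha hb hab
      simp only [hEpi, Set.mem_setOf_eq] at hp hq ⊢
      obtain ⟨s1, hs1, hs1le⟩ := hreal (p.1 : X) p.2 hp
      obtain ⟨s2, hs2, hs2le⟩ := hreal (q.1 : X) q.2 hq
      have hc := hconv (p.1 : X) (q.1 : X) a b ha hb hab
      rw [hs1, hs2, ← EReal.coe_mul, ← EReal.coe_mul, ← EReal.coe_add] at hc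
      have harg : (((a • p + b • q).1 : Y) : X) = a • (p.1 : X) + b • (q.1 : X) := by
        simp
      have harg2 : ((a • p + b • q).2 : ℝ) = a * p.2 + b * q.2 := rfl
      rw [harg, harg2]
      refine hc.trans ?_
      exact_mod_cast add_le_add (mul_le_mul_of_nonneg_left hs1le ha)
        (mul_le_mul_of_nonneg_left hs2le hb)
    have hsub : (Metric.ball (0:Y) ε) ×ˢ (Set.Ioi M) ⊆ Epi := by
      rintro ⟨y, r⟩ ⟨hy, hr⟩
      simp only [hEpi, Set.mem_setOf_eq]
      have hyb : ‖(y : X)‖ ≤ ε := by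
        rw [mem_ball_zero_iff] at hy
        exact le_of_lt hy
      exact (hφM _ y.2 hyb).trans (by exact_mod_cast le_of_lt hr)
    have hopen : IsOpen ((Metric.ball (0:Y) ε) ×ˢ (Set.Ioi M)) :=
      Metric.isOpen_ball.prod isOpen_Ioi
    have hintsub := interior_maximal hsub hopen
    have hz0 : ((0:Y), M+1) ∈ interior Epi :=
      hintsub ⟨by simpa using hε, by simp⟩
    have hnotin : ((0:Y), r0) ∉ interior Epi := by
      intro h
      rw [mem_interior_iff_mem_nhds] at h
      rcases Metric.mem_nhds_iff.1 h with ⟨δ, hδ, hball⟩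
      have hmem : ((0:Y), r0 - δ/2) ∈ Epi := by
        apply hball
        rw [Metric.mem_ball, Prod.dist_eq]
        simp only [dist_self, Real.dist_eq]
        rw [show r0 - δ/2 - r0 = -(δ/2) by ring, abs_neg, abs_of_pos (by linarith)]
        exact max_lt hδ (by linarith)
      simp only [hEpi, Set.mem_setOf_eq, ZeroMemClass.coe_zero] at hmem
      rw [hr0, EReal.coe_le_coe_iff] at hmem
      linarith
    obtain ⟨f, hf⟩ := geometric_hahn_banach_open_point hEpiConv.interior isOpen_interior hnotin
    -- limit along the segment: f ≤ f(0,r0) on all of Epi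
    have hstar : ∀ w ∈ Epi, f w ≤ f ((0:Y), r0) := by
      intro w hw
      have hcont : Tendsto (fun θ : ℝ => θ * f ((0:Y), M+1) + (1 - θ) * f w)
          (nhdsWithin 0 (Set.Ioi 0)) (nhds (f w)) := by
        have hc : Continuous fun θ : ℝ => θ * f ((0:Y), M+1) + (1 - θ) * f w :=
          (continuous_id.mul continuous_const).add
            ((continuous_const.sub continuous_id).mul continuous_const)
        exact (hc.tendsto' 0 (f w) (by simp)).mono_left nhdsWithin_le_nhds
      apply le_of_tendsto hcont
      have hiio : Set.Iio (1:ℝ) ∈ nhdsWithin (0:ℝ) (Set.Ioi 0) :=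
        nhdsWithin_le_nhds (Iio_mem_nhds (by norm_num : (0:ℝ) < 1))
      filter_upwards [self_mem_nhdsWithin, hiio] with θ hθ hθ1
      have hθ0 : (0:ℝ) < θ := hθ
      have hθlt : θ < 1 := hθ1
      have hmem := hEpiConv.combo_interior_self_mem_interior hz0 hw hθ0
        (by linarith : (0:ℝ) ≤ 1 - θ) (by ring)
      have hlt := hf _ hmem
      rw [map_add, map_smul, map_smul, smul_eq_mul, smul_eq_mul] at hlt
      exact hlt.le
    set β : ℝ := f ((0:Y), 1) with hβdef
    have hf0r : ∀ r : ℝ, f ((0:Y), r) = r * β := by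
      intro r
      have h1 : ((0:Y), r) = r • (((0:Y), (1:ℝ)) : Y × ℝ) := by
        simp [Prod.smul_def]
      rw [h1, map_smul, smul_eq_mul]
    have hβneg : β < 0 := by
      set r : ℝ := max M r0 + 1 with hrdef
      have hrM : M < r := lt_of_le_of_lt (le_max_left M r0) (lt_add_one _)
      have hr : r0 < r := lt_of_le_of_lt (le_max_right M r0) (lt_add_one _)
      have hm1 : ((0:Y), r) ∈ Metric.ball (0:Y) ε ×ˢ Set.Ioi M := by
        constructor
        · simpa using hε
        · exact hrM
      have h2 := hf _ (hintsub hm1)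
      rw [hf0r, hf0r] at h2
      by_contra hcon
      push_neg at hcon
      nlinarith
    have hβpos : 0 < -β := by linarith
    -- subgradient inequality on Y
    have hgrad : ∀ y : Y, φ (y : X) ≠ ⊤ → (-β)⁻¹ * f (y, 0) ≤ (φ (y : X)).toReal - r0 := by
      intro y hy
      set ρ : ℝ := (φ (y : X)).toReal with hρdef
      have hmem : ((y, ρ) : Y × ℝ) ∈ Epi := by
        simp only [hEpi, Set.mem_setOf_eq]
        rw [EReal.coe_toReal hy (nbot _)]
      have hle := hstar _ hmem
      have hsplit : f (y, ρ) = f (y, 0) + ρ * β := by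
        have h1 : ((y, ρ) : Y × ℝ) = ((y, 0) : Y × ℝ) + (((0:Y), ρ) : Y × ℝ) := by
          simp
        rw [h1, map_add, hf0r]
      rw [hsplit, hf0r] at hle
      have h3 : f (y, 0) ≤ (r0 - ρ) * β := by linarith
      calc (-β)⁻¹ * f (y, 0) ≤ (-β)⁻¹ * ((r0 - ρ) * β) :=
            mul_le_mul_of_nonneg_left h3 (inv_nonneg.2 hβpos.le)
        _ = ρ - r0 := by rw [mul_comm (r0 - ρ) β, ← mul_assoc, inv_neg, neg_mul, inv_mul_cancel₀ hβneg.ne]; ring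
    -- extend to X
    set g0 : Y →L[ℝ] ℝ := (-β)⁻¹ • (f.comp (ContinuousLinearMap.inl ℝ Y ℝ)) with hg0
    obtain ⟨v, hv, -⟩ := exists_extension_norm_eq Y g0
    refine ⟨v, ?_⟩
    intro z
    by_cases hz : φ z = ⊤
    · rw [hz]; exact le_top
    · have hzY : z ∈ Y := (hYA z).1 (hdom (subset_affineSpan ℝ {x : X | φ x ≠ ⊤} hz))
      have hg := hgrad ⟨z, hzY⟩ hz
      have hvz : v z = (-β)⁻¹ * f (⟨z, hzY⟩, 0) := by
        have h1 := hv ⟨z, hzY⟩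
        simp only [hg0, ContinuousLinearMap.coe_smul', Pi.smul_apply,
          ContinuousLinearMap.comp_apply, ContinuousLinearMap.inl_apply, smul_eq_mul] at h1
        exact h1
      rw [hr0, show φ z = (((φ z).toReal : ℝ) : EReal) from (EReal.coe_toReal hz (nbot z)).symm,
        ← EReal.coe_add, EReal.coe_le_coe_iff, hvz]
      linarith
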